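/- For every natural number k, there exists an Evolomino instance having exactly k valid solutions. -/

import Mathlib

open Pointwise

/-- A cell of the (infinite) grid. -/
abbrev Cell : Type := ℤ × ℤ

/-- Orthogonal adjacency: the two cells differ by exactly 1 in exactly one coordinate. -/
def Adj (c d : Cell) : Prop :=
  (c.1 = d.1 ∧ (c.2 - d.2 = 1 ∨ d.2 - c.2 = 1)) ∨
  (c.2 = d.2 ∧ (c.1 - d.1 = 1 ∨ d.1 - c.1 = 1))

/-- The `p × q` board `{1,…,p} × {1,…,q} ⊆ ℤ × ℤ`. -/
def board (p q : ℕ) : Set Cell :=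
  {c | 1 ≤ c.1 ∧ c.1 ≤ (p : ℤ) ∧ 1 ≤ c.2 ∧ c.2 ≤ (q : ℤ)}

/-- The data of an Evolomino instance. -/
structure EvoInstance where
  p : ℕ
  q : ℕ
  shaded : Set Cell
  presq : Finset Cell
  arrows : List (List Cell)

/-- A cell is white if it lies on the board and is not shaded. -/
def EvoInstance.White (I : EvoInstance) (c : Cell) : Prop :=
  c ∈ board I.p I.q ∧ c ∉ I.shaded

/-- A legal arrow: a duplicate-free list of at least two white cells in which
consecutive cells are orthogonally adjacent. -/
def IsArrow (I : EvoInstance) (A : List Cell) : Prop :=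
  A.Nodup ∧ 2 ≤ A.length ∧ (∀ c ∈ A, I.White c) ∧ A.Chain' Adj

/-- Well-formedness of an Evolomino instance: positive dimensions, shaded cells on the
board, pre-drawn squares white, every arrow legal, and no cell on two arrows. -/
def EvoInstance.WellFormed (I : EvoInstance) : Prop :=
  0 < I.p ∧ 0 < I.q ∧ I.shaded ⊆ board I.p I.q ∧
  (∀ c ∈ I.presq, I.White c) ∧
  (∀ A ∈ I.arrows, IsArrow I A) ∧
  I.arrows.Pairwise (fun A B => ∀ c ∈ A, c ∉ B)

/-- A solution: a set of white cells containing the pre-drawn squares. -/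
def IsSolution (I : EvoInstance) (S : Set Cell) : Prop :=
  (∀ c ∈ S, I.White c) ∧ ↑I.presq ⊆ S

/-- Connectivity inside `S` via orthogonal adjacency. -/
def ConnIn (S : Set Cell) : Cell → Cell → Prop :=
  Relation.ReflTransGen (fun x y => x ∈ S ∧ y ∈ S ∧ Adj x y)

/-- `B` is a block of `S`: a connected component of `S` under orthogonal adjacency. -/
def IsBlock (S : Set Cell) (B : Set Cell) : Prop :=
  ∃ c ∈ S, B = {d | d ∈ S ∧ ConnIn S c d}

/-- The cell `c` lies on some arrow of the instance. -/
def OnArrow (I : EvoInstance) (c : Cell) : Prop :=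
  ∃ A ∈ I.arrows, c ∈ A

/-- The set `B` meets the arrow `A`. -/
def Meets (B : Set Cell) (A : List Cell) : Prop :=
  ∃ c ∈ B, c ∈ A

/-- The first position along the arrow `A` at which a cell of `B` occurs. -/
noncomputable def firstHit (A : List Cell) (B : Set Cell) : ℕ :=
  sInf {i | ∃ h : i < A.length, A.get ⟨i, h⟩ ∈ B}

/-- `B` and `B'` are consecutive blocks of `S` (in arrow order) meeting the arrow `A`. -/
def Consecutive (S : Set Cell) (A : List Cell) (B B' : Set Cell) : Prop :=
  IsBlock S B ∧ IsBlock S B' ∧ Meets B A ∧ Meets B' A ∧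
  firstHit A B < firstHit A B' ∧
  ∀ B'', IsBlock S B'' → Meets B'' A →
    firstHit A B'' ≤ firstHit A B ∨ firstHit A B' ≤ firstHit A B''

/-- A valid solution of an Evolomino instance. -/
def IsValidSolution (I : EvoInstance) (S : Set Cell) : Prop :=
  IsSolution I S ∧
  (∀ B, IsBlock S B → ∃! c, c ∈ B ∧ OnArrow I c) ∧
  (∀ A ∈ I.arrows, ∃ B B', IsBlock S B ∧ IsBlock S B' ∧ B ≠ B' ∧
    Meets B A ∧ Meets B' A) ∧
  (∀ A ∈ I.arrows, ∀ B B', Consecutive S A B B' →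
    B'.ncard = B.ncard + 1 ∧ ∃ v : Cell, v +ᵥ B ⊆ B')

lemma adj_symm {c d : Cell} (h : Adj c d) : Adj d c := by
  unfold Adj at *; omega

lemma connIn_symm {S : Set Cell} {a b : Cell} (h : ConnIn S a b) : ConnIn S b a := by
  induction h with
  | refl => exact Relation.ReflTransGen.refl
  | tail _ hlast ih =>
    exact Relation.ReflTransGen.head ⟨hlast.2.1, hlast.1, adj_symm hlast.2.2⟩ ih

lemma connIn_trans {S : Set Cell} {a b c : Cell} (h1 : ConnIn S a b) (h2 : ConnIn S b c) :
    ConnIn S a c := Relation.ReflTransGen.trans h1 h2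

lemma block_subset {S B : Set Cell} (h : IsBlock S B) : B ⊆ S := by
  obtain ⟨c, hc, rfl⟩ := h; intro x hx; exact hx.1

lemma block_closed {S B : Set Cell} (h : IsBlock S B) {x y : Cell}
    (hx : x ∈ B) (hy : y ∈ S) (hadj : Adj x y) : y ∈ B := by
  obtain ⟨c, hc, rfl⟩ := h
  exact ⟨hy, hx.2.tail ⟨hx.1, hy, hadj⟩⟩

lemma comp_isBlock {S : Set Cell} {c : Cell} (hc : c ∈ S) :
    IsBlock S {d | d ∈ S ∧ ConnIn S c d} := ⟨c, hc, rfl⟩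

lemma mem_comp_self {S : Set Cell} {c : Cell} (hc : c ∈ S) :
    c ∈ {d | d ∈ S ∧ ConnIn S c d} := ⟨hc, Relation.ReflTransGen.refl⟩

lemma block_eq_of_mem {S B B' : Set Cell} (h : IsBlock S B) (h' : IsBlock S B')
    {x : Cell} (hx : x ∈ B) (hx' : x ∈ B') : B = B' := by
  obtain ⟨c, hc, rfl⟩ := h
  obtain ⟨c', hc', rfl⟩ := h'
  have hcc' : ConnIn S c' c := connIn_trans hx'.2 (connIn_symm hx.2)
  ext y
  constructor
  · rintro ⟨hyS, hy⟩; exact ⟨hyS, connIn_trans hcc' hy⟩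
  · rintro ⟨hyS, hy⟩; exact ⟨hyS, connIn_trans (connIn_symm hcc') hy⟩

lemma comp_subset_closed {S C : Set Cell} {c : Cell} (hcC : c ∈ C)
    (hcl : ∀ x ∈ C, ∀ y ∈ S, Adj x y → y ∈ C) :
    {d | d ∈ S ∧ ConnIn S c d} ⊆ C := by
  intro d hd
  obtain ⟨hdS, hconn⟩ := hd
  clear hdS
  induction hconn with
  | refl => exact hcC
  | tail _ hlast ih => exact hcl _ ih _ hlast.2.1 hlast.2.2

lemma exists_block_of_mem {S : Set Cell} {x : Cell} (hx : x ∈ S) :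
    ∃ B, IsBlock S B ∧ x ∈ B := ⟨_, comp_isBlock hx, mem_comp_self hx⟩

lemma mem_block_conn_step {S B : Set Cell} (hB : IsBlock S B) {x y : Cell}
    (hx : x ∈ B) (hy : y ∈ B) (hne : x ≠ y) :
    ∃ z, z ∈ S ∧ Adj x z ∧ ConnIn S z y := by
  obtain ⟨c, hc, rfl⟩ := hB
  have h : ConnIn S x y := connIn_trans (connIn_symm hx.2) hy.2
  rcases Relation.ReflTransGen.cases_head h with heq | ⟨z, hz, hconn⟩
  · exact absurd heq hne
  · exact ⟨z, hz.2.1, hz.2.2, hconn⟩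
/-- The `i`-th arrow cell. -/
def fcell (i : ℕ) : Cell := ((i:ℤ)+1, 1)

/-- The arrow: the whole bottom row, left to right. -/
def arrowK (k : ℕ) : List Cell := (List.range (2*k+1)).map fcell

/-- The instance for `k ≥ 1`. -/
def Ik (k : ℕ) : EvoInstance where
  p := 2*k+1
  q := 2
  shaded := {c | c ∈ board (2*k+1) 2 ∧ c.2 = 2 ∧ ¬ (3 ≤ c.1 ∧ c.1 % 2 = 1)}
  presq := {((1:ℤ),(1:ℤ))}
  arrows := [arrowK k]

lemma mem_arrowK {k : ℕ} {c : Cell} :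
    c ∈ arrowK k ↔ c.2 = 1 ∧ 1 ≤ c.1 ∧ c.1 ≤ 2*k+1 := by
  unfold arrowK fcell
  simp only [List.mem_map, List.mem_range]
  constructor
  · rintro ⟨i, hi, rfl⟩; refine ⟨rfl, by omega, ?_⟩
    push_cast; omega
  · rintro ⟨h2, h1, h3⟩
    refine ⟨(c.1 - 1).toNat, by omega, ?_⟩
    have : ((c.1 - 1).toNat : ℤ) = c.1 - 1 := Int.toNat_of_nonneg (by omega)
    ext <;> simp [this] <;> omega

lemma white_iff {k : ℕ} {c : Cell} :
    (Ik k).White c ↔ (1 ≤ c.1 ∧ c.1 ≤ 2*k+1) ∧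
      (c.2 = 1 ∨ (c.2 = 2 ∧ 3 ≤ c.1 ∧ c.1 % 2 = 1)) := by
  unfold EvoInstance.White Ik board
  simp only [Set.mem_setOf_eq]
  push_cast
  constructor
  · rintro ⟨⟨h1, h2, h3, h4⟩, hsh⟩
    refine ⟨⟨h1, h2⟩, ?_⟩
    by_cases hc2 : c.2 = 1
    · exact Or.inl hc2
    · right
      have hc2' : c.2 = 2 := by omega
      refine ⟨hc2', ?_⟩
      by_contra hno
      exact hsh ⟨⟨h1, h2, h3, h4⟩, hc2', fun h => hno ⟨h.1, h.2⟩⟩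
  · rintro ⟨⟨h1, h2⟩, h⟩
    rcases h with h | ⟨ha, hb, hc⟩
    · exact ⟨⟨h1, h2, by omega, by omega⟩, fun hsh => by omega⟩
    · exact ⟨⟨h1, h2, by omega, by omega⟩, fun hsh => hsh.2.2 ⟨hb, hc⟩⟩

lemma onArrow_iff {k : ℕ} {c : Cell} :
    OnArrow (Ik k) c ↔ c.2 = 1 ∧ 1 ≤ c.1 ∧ c.1 ≤ 2*k+1 := by
  unfold OnArrow Ik
  simp [mem_arrowK]

lemma arrowK_get {k : ℕ} (i : ℕ) (h : i < (arrowK k).length) :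
    (arrowK k).get ⟨i, h⟩ = ((i:ℤ)+1, 1) := by
  unfold arrowK at *
  simp [fcell] at *

lemma arrowK_length {k : ℕ} : (arrowK k).length = 2*k+1 := by
  simp [arrowK]
/-- Every block of a solution of `Ik k` with a unique arrow cell sits in a single
column, consisting of the bottom cell and possibly the cell above it. -/
lemma block_classify {k : ℕ} {S B : Set Cell} (hS : ∀ c ∈ S, (Ik k).White c)
    (hB : IsBlock S B) (hu : ∃! c, c ∈ B ∧ OnArrow (Ik k) c) :
    ∃ j : ℤ, 1 ≤ j ∧ j ≤ 2*k+1 ∧ ((j,1) : Cell) ∈ B ∧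
      B ⊆ {((j,1) : Cell), (j,2)} := by
  obtain ⟨c0, ⟨hc0B, hc0arr⟩, huniq⟩ := hu
  obtain ⟨hc02, hc01, hc0u⟩ := onArrow_iff.mp hc0arr
  have hc0 : c0 = (c0.1, 1) := by rw [← hc02]
  refine ⟨c0.1, hc01, hc0u, by rwa [← hc0], ?_⟩
  intro x hxB
  have hxS : x ∈ S := block_subset hB hxB
  have hxw := white_iff.mp (hS x hxS)
  rcases hxw.2 with hx2 | ⟨hx2, hx3, hx4⟩
  · -- bottom row: x is an arrow cell, so x = c0
    have : x = c0 := huniq x ⟨hxB, onArrow_iff.mpr ⟨hx2, hxw.1⟩⟩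
    left
    rw [this, hc0]
  · -- top row: the only possible neighbour is the cell below
    have hxne : x ≠ c0 := by
      intro h; rw [h] at hx2; omega
    obtain ⟨z, hzS, hadj, _⟩ := mem_block_conn_step hB hxB hc0B hxne
    have hzw := white_iff.mp (hS z hzS)
    have hz : z = (x.1, 1) := by
      rcases hzw.2 with hz2 | ⟨hz2, hz3, hz4⟩ <;>
      · unfold Adj at hadj
        have : z = (z.1, z.2) := rfl
        rw [this]
        have : x = (x.1, x.2) := rfl
        rw [this] at hadj ⊢
        simp only [Prod.mk.injEq] at hadj ⊢
        omega
    have hzB : z ∈ B := block_closed hB hxB hzS hadj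
    have : z = c0 := huniq z ⟨hzB, onArrow_iff.mpr ⟨by rw [hz], by rw [hz]; exact hxw.1⟩⟩
    right
    have hx1 : x.1 = c0.1 := by rw [← this, hz]
    have : x = (x.1, x.2) := rfl
    rw [this, hx1, hx2]
    rfl

lemma meets_arrowK {k : ℕ} {B : Set Cell} {j : ℤ} (h1 : 1 ≤ j) (h2 : j ≤ 2*k+1)
    (hjB : ((j,1) : Cell) ∈ B) : Meets B (arrowK k) :=
  ⟨(j,1), hjB, mem_arrowK.mpr ⟨rfl, h1, h2⟩⟩

lemma firstHit_eq {k : ℕ} {B : Set Cell} {j : ℤ} (h1 : 1 ≤ j) (h2 : j ≤ 2*k+1)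
    (hjB : ((j,1) : Cell) ∈ B) (hsub : B ⊆ {((j,1) : Cell), (j,2)}) :
    firstHit (arrowK k) B = (j-1).toNat := by
  unfold firstHit
  have hset : {i | ∃ h : i < (arrowK k).length, (arrowK k).get ⟨i, h⟩ ∈ B}
      = {(j-1).toNat} := by
    ext i
    simp only [Set.mem_setOf_eq, Set.mem_singleton_iff]
    constructor
    · rintro ⟨h, hmem⟩
      rw [arrowK_get] at hmem
      have h' := hsub hmem
      simp only [Set.mem_insert_iff, Set.mem_singleton_iff, Prod.mk.injEq] at h'
      omega
    · rintro rfl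
      have hlen : (j-1).toNat < (arrowK k).length := by
        rw [arrowK_length]; omega
      refine ⟨hlen, ?_⟩
      rw [arrowK_get]
      have : ((j-1).toNat : ℤ) + 1 = j := by omega
      rw [this]
      exact hjB
  rw [hset]
  exact csInf_singleton _
/-- The candidate solution with its second block in column `m`. -/
def Sm (m : ℤ) : Set Cell := {((1:ℤ),(1:ℤ)), (m,1), (m,2)}

lemma adj_mk {a b c d : ℤ} : Adj (a,b) (c,d) ↔
    (a = c ∧ (b - d = 1 ∨ d - b = 1)) ∨ (b = d ∧ (a - c = 1 ∨ c - a = 1)) := Iff.rfl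

lemma mem_Sm {m : ℤ} {x : Cell} :
    x ∈ Sm m ↔ x = ((1:ℤ),(1:ℤ)) ∨ x = ((m,1) : Cell) ∨ x = ((m,2) : Cell) := by
  simp [Sm]

lemma comp_one {m : ℤ} (h3 : 3 ≤ m) :
    {d | d ∈ Sm m ∧ ConnIn (Sm m) ((1:ℤ),(1:ℤ)) d} = {((1:ℤ),(1:ℤ))} := by
  apply Set.Subset.antisymm
  · apply comp_subset_closed (Set.mem_singleton _)
    intro x hx y hy hadj
    rcases hx with rfl
    rcases mem_Sm.mp hy with rfl | rfl | rfl
    · rfl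
    · rw [adj_mk] at hadj; omega
    · rw [adj_mk] at hadj; omega
  · intro x hx
    rcases hx with rfl
    exact mem_comp_self (by rw [mem_Sm]; left; rfl)

lemma comp_m {m : ℤ} (h3 : 3 ≤ m) {c : Cell}
    (hc : c = ((m,1) : Cell) ∨ c = ((m,2) : Cell)) :
    {d | d ∈ Sm m ∧ ConnIn (Sm m) c d} = {((m,1) : Cell), (m,2)} := by
  have hm1 : ((m,1) : Cell) ∈ Sm m := by rw [mem_Sm]; right; left; rfl
  have hm2 : ((m,2) : Cell) ∈ Sm m := by rw [mem_Sm]; right; right; rfl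
  have hadj12 : Adj ((m,1) : Cell) (m,2) := by rw [adj_mk]; omega
  apply Set.Subset.antisymm
  · apply comp_subset_closed
    · rcases hc with rfl | rfl
      · left; rfl
      · right; rfl
    · intro x hx y hy hadj
      rcases mem_Sm.mp hy with rfl | rfl | rfl
      · exfalso
        rcases hx with rfl | rfl <;> (rw [adj_mk] at hadj; omega)
      · left; rfl
      · right; rfl
  · have hconn : ConnIn (Sm m) c ((m,1) : Cell) ∧ ConnIn (Sm m) c ((m,2) : Cell) := by
      rcases hc with rfl | rfl
      · exact ⟨Relation.ReflTransGen.refl,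
          Relation.ReflTransGen.single ⟨hm1, hm2, hadj12⟩⟩
      · exact ⟨Relation.ReflTransGen.single ⟨hm2, hm1, adj_symm hadj12⟩,
          Relation.ReflTransGen.refl⟩
    intro x hx
    rcases hx with rfl | rfl
    · exact ⟨hm1, hconn.1⟩
    · exact ⟨hm2, hconn.2⟩

lemma blocks_Sm {m : ℤ} (h3 : 3 ≤ m) {B : Set Cell} (hB : IsBlock (Sm m) B) :
    B = {((1:ℤ),(1:ℤ))} ∨ B = {((m,1) : Cell), (m,2)} := by
  obtain ⟨c, hc, rfl⟩ := hB
  rcases mem_Sm.mp hc with rfl | hc' | hc'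
  · left; exact comp_one h3
  · right; exact comp_m h3 (Or.inl hc')
  · right; exact comp_m h3 (Or.inr hc')
lemma one_ne_m {m : ℤ} (h3 : 3 ≤ m) :
    ({((1:ℤ),(1:ℤ))} : Set Cell) ≠ {((m,1) : Cell), (m,2)} := by
  intro h
  have : ((1:ℤ),(1:ℤ)) ∈ ({((m,1) : Cell), (m,2)} : Set Cell) := h ▸ Set.mem_singleton _
  rcases this with h' | h'
  · rw [Prod.ext_iff] at h'
    obtain ⟨h1', h2'⟩ := h'
    simp only at h1' h2'
    omega
  · rw [Set.mem_singleton_iff, Prod.ext_iff] at h'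
    obtain ⟨h1', h2'⟩ := h'
    simp only at h1' h2'
    omega

lemma valid_Sm {k : ℕ} {m : ℤ} (h3 : 3 ≤ m) (hk : m ≤ 2*k+1) (ho : m % 2 = 1) :
    IsValidSolution (Ik k) (Sm m) := by
  have hm1S : ((m,1) : Cell) ∈ Sm m := by rw [mem_Sm]; right; left; rfl
  have hm2S : ((m,2) : Cell) ∈ Sm m := by rw [mem_Sm]; right; right; rfl
  have h11S : ((1:ℤ),(1:ℤ)) ∈ Sm m := by rw [mem_Sm]; left; rfl
  have hpairne : ((m,1) : Cell) ≠ (m,2) := by simp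
  have hB1 : IsBlock (Sm m) {((1:ℤ),(1:ℤ))} := ⟨_, h11S, (comp_one h3).symm⟩
  have hB2 : IsBlock (Sm m) {((m,1) : Cell), (m,2)} :=
    ⟨_, hm1S, (comp_m h3 (Or.inl rfl)).symm⟩
  have hfh1 : firstHit (arrowK k) {((1:ℤ),(1:ℤ))} = 0 := by
    have := firstHit_eq (k := k) (j := 1) le_rfl (by omega) (Set.mem_singleton _)
      (by intro x hx; rcases hx with rfl; left; rfl)
    simpa using this
  have hfh2 : firstHit (arrowK k) {((m,1) : Cell), (m,2)} = (m-1).toNat :=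
    firstHit_eq (by omega) hk (by left; rfl) (fun x hx => hx)
  refine ⟨⟨?_, ?_⟩, ?_, ?_, ?_⟩
  · intro c hc
    rcases mem_Sm.mp hc with rfl | rfl | rfl <;> rw [white_iff] <;>
      constructor <;> simp <;> omega
  · intro c hc
    simp only [Ik, Finset.coe_singleton, Set.mem_singleton_iff] at hc
    subst hc; exact h11S
  · intro B hB
    rcases blocks_Sm h3 hB with rfl | rfl
    · refine ⟨((1:ℤ),(1:ℤ)),
        ⟨Set.mem_singleton _, onArrow_iff.mpr ⟨rfl, le_refl _, by omega⟩⟩, ?_⟩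
      rintro y ⟨hy, _⟩
      exact hy
    · refine ⟨((m,1) : Cell),
        ⟨by left; rfl, onArrow_iff.mpr ⟨rfl, by omega, hk⟩⟩, ?_⟩
      rintro y ⟨hy, hyarr⟩
      rcases hy with rfl | rfl
      · rfl
      · exact absurd (onArrow_iff.mp hyarr).1 (by norm_num)
  · intro A hA
    have hA' : A = arrowK k := by simpa [Ik] using hA
    subst hA'
    exact ⟨_, _, hB1, hB2, one_ne_m h3,
      meets_arrowK le_rfl (by omega) (Set.mem_singleton _),
      meets_arrowK (by omega : (1:ℤ) ≤ m) hk (by left; rfl)⟩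
  · intro A hA B B' hcons
    have hA' : A = arrowK k := by simpa [Ik] using hA
    subst hA'
    obtain ⟨hB, hB', _, _, hlt, _⟩ := hcons
    rcases blocks_Sm h3 hB with rfl | rfl <;> rcases blocks_Sm h3 hB' with rfl | rfl
    · exact absurd hlt (lt_irrefl _)
    · refine ⟨by rw [Set.ncard_pair hpairne, Set.ncard_singleton], ⟨((m-1 : ℤ), (0:ℤ)), ?_⟩⟩
      rintro x ⟨b, hb, rfl⟩
      rcases hb with rfl
      left
      show ((m-1 : ℤ), (0:ℤ)) + ((1:ℤ),(1:ℤ)) = ((m,1) : Cell)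
      simp only [Prod.mk.injEq, Prod.mk_add_mk]
      omega
    · exfalso; rw [hfh1, hfh2] at hlt; omega
    · exact absurd hlt (lt_irrefl _)
lemma mem_pair_elim {x : Cell} {j : ℤ}
    (h : x ∈ ({((j,1) : Cell), (j,2)} : Set Cell)) : x.1 = j ∧ (x.2 = 1 ∨ x.2 = 2) := by
  rcases h with rfl | h
  · exact ⟨rfl, Or.inl rfl⟩
  · rcases h with rfl
    exact ⟨rfl, Or.inr rfl⟩

lemma solution_eq_Sm {k : ℕ} {S : Set Cell} (hS : IsValidSolution (Ik k) S) :
    ∃ m : ℤ, 3 ≤ m ∧ m ≤ 2*k+1 ∧ m % 2 = 1 ∧ S = Sm m := by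
  obtain ⟨⟨hSw, hpre⟩, huniq, htwo, hgrow⟩ := hS
  have hAmem : arrowK k ∈ (Ik k).arrows := by simp [Ik]
  have h11 : ((1:ℤ),(1:ℤ)) ∈ S := hpre (by simp [Ik])
  -- every block sits in a column
  have hcol : ∀ B, IsBlock S B → ∃ j : ℤ, 1 ≤ j ∧ j ≤ 2*k+1 ∧
      ((j,1) : Cell) ∈ B ∧ B ⊆ {((j,1) : Cell), (j,2)} :=
    fun B hB => block_classify hSw hB (huniq B hB)
  -- the first block
  set B1 : Set Cell := {d | d ∈ S ∧ ConnIn S ((1:ℤ),(1:ℤ)) d} with hB1def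
  have hB1 : IsBlock S B1 := comp_isBlock h11
  have h11B1 : ((1:ℤ),(1:ℤ)) ∈ B1 := mem_comp_self h11
  have h12 : ((1:ℤ),(2:ℤ)) ∉ S := by
    intro h
    have hw := white_iff.mp (hSw _ h)
    simp only at hw
    omega
  have hB1eq : B1 = {((1:ℤ),(1:ℤ))} := by
    obtain ⟨j1, hj1a, hj1b, hj1B, hj1sub⟩ := hcol B1 hB1
    have hj1 : j1 = 1 := by
      have h' := mem_pair_elim (hj1sub h11B1)
      simp only at h'
      omega
    subst hj1
    apply Set.Subset.antisymm
    · intro x hx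
      rcases hj1sub hx with rfl | rfl
      · rfl
      · exact absurd (block_subset hB1 hx) h12
    · intro x hx; rcases hx with rfl; exact h11B1
  have hfhB1 : firstHit (arrowK k) B1 = 0 := by
    have := firstHit_eq (k := k) (B := B1) (j := 1) le_rfl (by omega)
      (by rw [hB1eq]; rfl) (by rw [hB1eq]; intro x hx; rcases hx with rfl; left; rfl)
    simpa using this
  -- a block containing (1,1) is B1
  have hisB1 : ∀ B, IsBlock S B → ((1:ℤ),(1:ℤ)) ∈ B → B = B1 :=
    fun B hB h => block_eq_of_mem hB hB1 h h11B1
  -- the set of columns ≥ 2 of cells of S in the bottom row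
  set T : Set ℕ := {n | 2 ≤ n ∧ ((n:ℤ),(1:ℤ)) ∈ S} with hTdef
  have hTne : T.Nonempty := by
    obtain ⟨B, B', hB, hB', hne, _, _⟩ := htwo _ hAmem
    obtain ⟨j, hja, hjb, hjB, hjsub⟩ := hcol B hB
    obtain ⟨j', hja', hjb', hjB', hjsub'⟩ := hcol B' hB'
    have key : ∃ j : ℤ, 2 ≤ j ∧ ((j,1) : Cell) ∈ S := by
      by_cases hj : j = 1
      · by_cases hj' : j' = 1
        · exfalso
          apply hne
          rw [hisB1 B hB (hj ▸ hjB), hisB1 B' hB' (hj' ▸ hjB')]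
        · exact ⟨j', by omega, block_subset hB' hjB'⟩
      · exact ⟨j, by omega, block_subset hB hjB⟩
    obtain ⟨j, hj2, hjS⟩ := key
    refine ⟨j.toNat, by omega, ?_⟩
    have : ((j.toNat : ℤ)) = j := Int.toNat_of_nonneg (by omega)
    rw [this]
    exact hjS
  set m' : ℕ := sInf T with hm'def
  have hm'T : m' ∈ T := Nat.sInf_mem hTne
  obtain ⟨hm'2, hm'S⟩ := hm'T
  set m : ℤ := (m' : ℤ) with hmdef
  have hm2 : 2 ≤ m := by omega
  -- the second block
  set B2 : Set Cell := {d | d ∈ S ∧ ConnIn S ((m,1) : Cell) d} with hB2def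
  have hB2 : IsBlock S B2 := comp_isBlock hm'S
  have hm1B2 : ((m,1) : Cell) ∈ B2 := mem_comp_self hm'S
  obtain ⟨j2, hj2a, hj2b, hj2B, hj2sub⟩ := hcol B2 hB2
  have hj2 : j2 = m := by
    have h' := mem_pair_elim (hj2sub hm1B2)
    simp only at h'
    omega
  subst hj2
  have hmk : m ≤ 2*k+1 := hj2b
  have hfhB2 : firstHit (arrowK k) B2 = (m-1).toNat :=
    firstHit_eq (by omega) hmk hj2B hj2sub
  have hB1ne2 : B1 ≠ B2 := by
    intro h
    have : ((1:ℤ),(1:ℤ)) ∈ B2 := h ▸ h11B1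
    have h' := mem_pair_elim (hj2sub this)
    simp only at h'
    omega
  -- fh of a general block
  have hfhgen : ∀ B (hB : IsBlock S B), Meets B (arrowK k) →
      (B = B1 ∧ firstHit (arrowK k) B = 0) ∨
      (∃ j : ℤ, 2 ≤ j ∧ j.toNat ∈ T ∧ ((j,1) : Cell) ∈ B ∧
        firstHit (arrowK k) B = (j-1).toNat) := by
    intro B hB _
    obtain ⟨j, hja, hjb, hjB, hjsub⟩ := hcol B hB
    by_cases hj : j = 1
    · subst hj
      exact Or.inl ⟨hisB1 B hB hjB, by
        have := firstHit_eq (k := k) (j := 1) le_rfl (by omega) hjB hjsub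
        simpa using this⟩
    · refine Or.inr ⟨j, by omega, ?_, hjB, firstHit_eq hja hjb hjB hjsub⟩
      have hc : ((j.toNat : ℤ)) = j := Int.toNat_of_nonneg (by omega)
      exact ⟨by omega, by rw [hc]; exact block_subset hB hjB⟩
  -- B1 and B2 are consecutive
  have hcons : Consecutive S (arrowK k) B1 B2 := by
    refine ⟨hB1, hB2, meets_arrowK le_rfl (by omega) (by rw [hB1eq]; rfl),
      meets_arrowK (by omega) hmk hj2B, by rw [hfhB1, hfhB2]; omega, ?_⟩
    intro B'' hB'' hm''
    rcases hfhgen B'' hB'' hm'' with ⟨_, hfh⟩ | ⟨j, hj2', hjT, _, hfh⟩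
    · left; rw [hfh, hfhB1]
    · right
      rw [hfh, hfhB2]
      have := Nat.sInf_le hjT
      omega
  obtain ⟨hcard2, _⟩ := hgrow _ hAmem B1 B2 hcons
  rw [hB1eq, Set.ncard_singleton] at hcard2
  have hm2B2 : ((m,2) : Cell) ∈ B2 := by
    by_contra h
    have : B2 = {((m,1) : Cell)} := by
      apply Set.Subset.antisymm
      · intro x hx
        rcases hj2sub hx with rfl | rfl
        · rfl
        · exact absurd hx h
      · intro x hx; rcases hx with rfl; exact hm1B2
    rw [this, Set.ncard_singleton] at hcard2
    omega
  have hB2eq : B2 = {((m,1) : Cell), (m,2)} := by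
    apply Set.Subset.antisymm hj2sub
    intro x hx
    rcases hx with rfl | rfl
    · exact hm1B2
    · exact hm2B2
  have hm2S : ((m,2) : Cell) ∈ S := block_subset hB2 hm2B2
  have hw2 := white_iff.mp (hSw _ hm2S)
  simp only at hw2
  have h3m : 3 ≤ m := by omega
  have hom : m % 2 = 1 := by omega
  -- T is a singleton
  have hTsing : ∀ n ∈ T, n = m' := by
    by_contra hcon
    push_neg at hcon
    obtain ⟨n0, hn0T, hn0ne⟩ := hcon
    set U : Set ℕ := {n | n ∈ T ∧ n ≠ m'} with hUdef
    have hUne : U.Nonempty := ⟨n0, hn0T, hn0ne⟩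
    set m3' : ℕ := sInf U with hm3def
    have hm3U : m3' ∈ U := Nat.sInf_mem hUne
    obtain ⟨⟨hm3'2, hm3'S⟩, hm3'ne⟩ := hm3U
    set m3 : ℤ := (m3' : ℤ) with hm3zdef
    have hmm3 : m < m3 := by
      have h1 := Nat.sInf_le (show m3' ∈ T from ⟨hm3'2, hm3'S⟩)
      omega
    set B3 : Set Cell := {d | d ∈ S ∧ ConnIn S ((m3,1) : Cell) d} with hB3def
    have hB3 : IsBlock S B3 := comp_isBlock hm3'S
    have hm3B3 : ((m3,1) : Cell) ∈ B3 := mem_comp_self hm3'S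
    obtain ⟨j3, hj3a, hj3b, hj3B, hj3sub⟩ := hcol B3 hB3
    have hj3 : j3 = m3 := by
      have h' := mem_pair_elim (hj3sub hm3B3)
      simp only at h'
      omega
    subst hj3
    have hfhB3 : firstHit (arrowK k) B3 = (m3-1).toNat :=
      firstHit_eq hj3a hj3b hj3B hj3sub
    have hcons23 : Consecutive S (arrowK k) B2 B3 := by
      refine ⟨hB2, hB3, meets_arrowK (by omega) hmk hj2B,
        meets_arrowK hj3a hj3b hj3B, by rw [hfhB2, hfhB3]; omega, ?_⟩
      intro B'' hB'' hm''
      rcases hfhgen B'' hB'' hm'' with ⟨_, hfh⟩ | ⟨j, hj2', hjT, hjB'', hfh⟩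
      · left; rw [hfh, hfhB2]; omega
      · by_cases hjm : j = m
        · left
          have : B'' = B2 := block_eq_of_mem hB'' hB2 (hjm ▸ hjB'') hm1B2
          rw [this]
        · right
          rw [hfh, hfhB3]
          have hjU : j.toNat ∈ U := ⟨hjT, by omega⟩
          have := Nat.sInf_le hjU
          omega
    obtain ⟨hcard3, _⟩ := hgrow _ hAmem B2 B3 hcons23
    rw [hcard2] at hcard3
    have hle : B3.ncard ≤ 2 := by
      have hfin : ({((m3,1) : Cell), (m3,2)} : Set Cell).Finite :=
        (Set.finite_singleton _).insert _
      calc B3.ncard ≤ ({((m3,1) : Cell), (m3,2)} : Set Cell).ncard :=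
            Set.ncard_le_ncard hj3sub hfin
        _ ≤ 2 := by
            rw [Set.ncard_pair (by simp)]
    omega
  refine ⟨m, h3m, hmk, hom, ?_⟩
  ext x
  constructor
  · intro hx
    obtain ⟨B, hB, hxB⟩ := exists_block_of_mem hx
    obtain ⟨j, hja, hjb, hjB, hjsub⟩ := hcol B hB
    rw [mem_Sm]
    by_cases hj : j = 1
    · subst hj
      have : B = B1 := hisB1 B hB hjB
      rw [this, hB1eq] at hxB
      rcases hxB with rfl
      left; rfl
    · have hjm : j = m := by
        have hc : ((j.toNat : ℤ)) = j := Int.toNat_of_nonneg (by omega)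
        have : j.toNat ∈ T := ⟨by omega, by rw [hc]; exact block_subset hB hjB⟩
        have := hTsing _ this
        omega
      subst hjm
      rcases hjsub hxB with rfl | rfl
      · right; left; rfl
      · right; right; rfl
  · intro hx
    rcases mem_Sm.mp hx with rfl | rfl | rfl
    · exact h11
    · exact hm'S
    · exact hm2S
lemma wf_Ik {k : ℕ} (hk : 1 ≤ k) : (Ik k).WellFormed := by
  refine ⟨by simp [Ik], by simp [Ik], ?_, ?_, ?_, ?_⟩
  · intro c hc; exact hc.1
  · intro c hc
    simp only [Ik, Finset.mem_singleton] at hc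
    subst hc
    rw [white_iff]
    refine ⟨⟨le_refl _, by omega⟩, Or.inl rfl⟩
  · intro A hA
    have hA' : A = arrowK k := by simpa [Ik] using hA
    subst hA'
    refine ⟨?_, ?_, ?_, ?_⟩
    · apply List.Nodup.map
      · intro i j hij
        simp only [fcell, Prod.mk.injEq] at hij
        omega
      · exact List.nodup_range
    · rw [arrowK_length]; omega
    · intro c hc
      obtain ⟨h2, h1, h3⟩ := mem_arrowK.mp hc
      rw [white_iff]
      exact ⟨⟨h1, h3⟩, Or.inl h2⟩
    · unfold arrowK
      simp only [List.Chain']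
      rw [List.isChain_map]
      have h21 : 2*k+1 = (2*k) + 1 := rfl
      rw [h21, List.isChain_range_succ]
      intro i hi
      show Adj (fcell i) (fcell (i+1))
      unfold fcell
      rw [adj_mk]
      refine Or.inr ⟨rfl, Or.inr ?_⟩
      push_cast
      ring
  · simp [Ik]

/-- The instance with no solutions. -/
def I0 : EvoInstance where
  p := 1
  q := 1
  shaded := ∅
  presq := {((1:ℤ),(1:ℤ))}
  arrows := []

lemma wf_I0 : I0.WellFormed := by
  refine ⟨by norm_num [I0], by norm_num [I0], by simp [I0], ?_, by simp [I0], by simp [I0]⟩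
  intro c hc
  simp only [I0, Finset.mem_singleton] at hc
  subst hc
  exact ⟨⟨le_refl _, le_refl _, le_refl _, le_refl _⟩, by simp [I0]⟩

lemma no_solutions_I0 : IsEmpty {S : Set Cell // IsValidSolution I0 S} := by
  constructor
  rintro ⟨S, ⟨⟨hSw, hpre⟩, huniq, -, -⟩⟩
  have h11 : ((1:ℤ),(1:ℤ)) ∈ S := hpre (by simp [I0])
  obtain ⟨B, hB, -⟩ := exists_block_of_mem h11
  obtain ⟨c, ⟨-, hcarr⟩, -⟩ := huniq B hB
  obtain ⟨A, hA, -⟩ := hcarr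
  simp [I0] at hA

lemma card_Ik {k : ℕ} (hk : 1 ≤ k) :
    Nat.card {S : Set Cell // IsValidSolution (Ik k) S} = k := by
  have hval : ∀ i : Fin k, IsValidSolution (Ik k) (Sm (2*(i:ℕ)+3)) := by
    intro i
    have hik := i.isLt
    exact valid_Sm (by omega) (by push_cast; omega) (by omega)
  let f : Fin k → {S : Set Cell // IsValidSolution (Ik k) S} :=
    fun i => ⟨Sm (2*(i:ℕ)+3), hval i⟩
  have hbij : Function.Bijective f := by
    constructor
    · intro i j hij
      have h : Sm (2*(i:ℕ)+3) = Sm (2*(j:ℕ)+3) := congrArg Subtype.val hij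
      have hmem : ((2*(i:ℕ)+3 : ℤ), (1:ℤ)) ∈ Sm (2*(j:ℕ)+3) := by
        rw [← h, mem_Sm]; right; left; rfl
      rw [mem_Sm] at hmem
      have : (i:ℕ) = (j:ℕ) := by
        rcases hmem with h' | h' | h' <;>
          (rw [Prod.ext_iff] at h'; simp only at h'; omega)
      exact Fin.ext this
    · rintro ⟨S, hS⟩
      obtain ⟨m, h3, hmk, ho, rfl⟩ := solution_eq_Sm hS
      have hn : ∃ n : ℕ, (2*(n:ℕ)+3 : ℤ) = m ∧ n < k :=
        ⟨(m-3).toNat / 2, by omega, by omega⟩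
      obtain ⟨n, hn1, hn2⟩ := hn
      refine ⟨⟨n, hn2⟩, ?_⟩
      apply Subtype.ext
      show Sm (2*(n:ℕ)+3) = Sm m
      rw [hn1]
  calc Nat.card {S : Set Cell // IsValidSolution (Ik k) S}
      = Nat.card (Fin k) := (Nat.card_eq_of_bijective f hbij).symm
    _ = k := Nat.card_eq_fintype_card.trans (Fintype.card_fin k)

/-- Every natural number is the number of valid solutions of some
(well-formed) Evolomino instance. -/
theorem evolomino_every_solution_count (k : ℕ) :
    ∃ I : EvoInstance, I.WellFormed ∧
      Nat.card {S : Set Cell // IsValidSolution I S} = k := by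
  cases k with
  | zero =>
    refine ⟨I0, wf_I0, ?_⟩
    have := no_solutions_I0
    simp [Nat.card_of_isEmpty]
  | succ k' =>
    exact ⟨Ik (k'+1), wf_Ik (by omega), card_Ik (by omega)⟩
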